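/- Either every member of G_A is unbounded, or every member of G_A is bounded. The second alternative (all members bounded) holds if and only if Q_{A,0} = {0}, and this is also equivalent to the condition that Q*_{A,c} is nonempty for every c ∈ ℝ^d. -/

import Mathlib

open scoped RealInnerProductSpace

noncomputable section

/-- `Q_{A,b} = {x ∈ ℝ^d : a_iᵀx ≤ b_i for all i}`. -/
def Qset {d N : ℕ} (a : Fin N → EuclideanSpace ℝ (Fin d)) (b : Fin N → ℝ) :
    Set (EuclideanSpace ℝ (Fin d)) :=
  {x | ∀ i, ⟪a i, x⟫ ≤ b i}

/-- `Q*_{A,c} = {p ∈ ℝ^N : p ≥ 0, Aᵀp = c}`. -/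
def Qstar {d N : ℕ} (a : Fin N → EuclideanSpace ℝ (Fin d)) (c : EuclideanSpace ℝ (Fin d)) :
    Set (Fin N → ℝ) :=
  {p | (∀ i, 0 ≤ p i) ∧ ∑ i, p i • a i = c}

/-- `G_A = {Q_{A,b} : b ∈ ℝ^N} \ {∅}`. -/
def GA {d N : ℕ} (a : Fin N → EuclideanSpace ℝ (Fin d)) :
    Set (Set (EuclideanSpace ℝ (Fin d))) :=
  {S | (∃ b, S = Qset a b) ∧ S.Nonempty}

lemma zero_mem_Qset_zero {d N : ℕ} (a : Fin N → EuclideanSpace ℝ (Fin d)) :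
    (0 : EuclideanSpace ℝ (Fin d)) ∈ Qset a 0 := by
  intro i
  simp [Qset]

lemma aux_unbounded {d N : ℕ} (a : Fin N → EuclideanSpace ℝ (Fin d))
    {y : EuclideanSpace ℝ (Fin d)} (hy : y ∈ Qset a 0) (hy0 : y ≠ 0) (b : Fin N → ℝ)
    (hne : (Qset a b).Nonempty) : ¬ Bornology.IsBounded (Qset a b) := by
  intro hb
  obtain ⟨x, hx⟩ := hne
  obtain ⟨R, hR⟩ := hb.subset_closedBall 0
  have hyn : (0 : ℝ) < ‖y‖ := norm_pos_iff.mpr hy0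
  set t : ℝ := (|R| + ‖x‖ + 1) / ‖y‖ with ht_def
  have ht : 0 ≤ t := by positivity
  have hmem : x + t • y ∈ Qset a b := by
    intro i
    have h1 : ⟪a i, y⟫ ≤ 0 := hy i
    have : ⟪a i, x + t • y⟫ = ⟪a i, x⟫ + t * ⟪a i, y⟫ := by
      rw [inner_add_right, real_inner_smul_right]
    rw [this]
    have h2 : t * ⟪a i, y⟫ ≤ 0 := mul_nonpos_of_nonneg_of_nonpos ht h1
    have h3 := hx i
    linarith
  have hball := hR hmem
  rw [Metric.mem_closedBall, dist_zero_right] at hball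
  have hty : ‖t • y‖ = |R| + ‖x‖ + 1 := by
    rw [norm_smul, Real.norm_eq_abs, abs_of_nonneg ht, ht_def, div_mul_cancel₀ _ (ne_of_gt hyn)]
  have h4 : ‖t • y‖ ≤ ‖x + t • y‖ + ‖x‖ := by
    have := norm_sub_le (x + t • y) x
    simpa [add_sub_cancel_left] using this
  have h5 : |R| ≤ R := by nlinarith [le_abs_self R, hty, hball, norm_nonneg x]
  nlinarith [le_abs_self R, norm_nonneg x]

lemma aux_bounded {d N : ℕ} (hd : 1 ≤ d) (hN : 1 ≤ N)
    (a : Fin N → EuclideanSpace ℝ (Fin d)) (h0 : Qset a 0 = {0}) (b : Fin N → ℝ) :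
    Bornology.IsBounded (Qset a b) := by
  have hNe : (Finset.univ : Finset (Fin N)).Nonempty := ⟨⟨0, hN⟩, Finset.mem_univ _⟩
  set f : EuclideanSpace ℝ (Fin d) → ℝ :=
    fun x => Finset.univ.sup' hNe (fun i => ⟪a i, x⟫) with hf_def
  have hf_cont : Continuous f := by
    apply Continuous.finset_sup'_apply hNe
    intro i _
    exact continuous_const.inner continuous_id
  haveI : Nontrivial (EuclideanSpace ℝ (Fin d)) := by
    have : Nonempty (Fin d) := ⟨⟨0, hd⟩⟩
    infer_instance
  have hsph : (Metric.sphere (0 : EuclideanSpace ℝ (Fin d)) 1).Nonempty :=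
    NormedSpace.sphere_nonempty.mpr (by norm_num)
  obtain ⟨u, hu_mem, hu_min⟩ :=
    (isCompact_sphere (0 : EuclideanSpace ℝ (Fin d)) 1).exists_isMinOn hsph hf_cont.continuousOn
  set ε : ℝ := f u with hε_def
  have hu_norm : ‖u‖ = 1 := by simpa using hu_mem
  have hε_pos : 0 < ε := by
    by_contra h
    push_neg at h
    have hu0 : u ∈ Qset a 0 := by
      intro i
      have : ⟪a i, u⟫ ≤ ε := Finset.le_sup' (fun i => ⟪a i, u⟫) (Finset.mem_univ i)
      simpa using this.trans h
    rw [h0] at hu0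
    rw [Set.mem_singleton_iff] at hu0
    rw [hu0] at hu_norm
    simp at hu_norm
  set B : ℝ := Finset.univ.sup' hNe b with hB_def
  rw [Metric.isBounded_iff_subset_closedBall (0 : EuclideanSpace ℝ (Fin d))]
  refine ⟨max 0 (B / ε), fun x hx => ?_⟩
  rw [Metric.mem_closedBall, dist_zero_right]
  by_cases hx0 : x = 0
  · simp [hx0]
  · have hxn : (0 : ℝ) < ‖x‖ := norm_pos_iff.mpr hx0
    have hu' : ‖x‖⁻¹ • x ∈ Metric.sphere (0 : EuclideanSpace ℝ (Fin d)) 1 := by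
      simp [norm_smul, abs_of_pos (inv_pos.mpr hxn), inv_mul_cancel₀ (ne_of_gt hxn)]
    have hmin := hu_min hu'
    have hle : f (‖x‖⁻¹ • x) ≤ ‖x‖⁻¹ * B := by
      apply Finset.sup'_le
      intro i _
      rw [real_inner_smul_right]
      have : b i ≤ B := Finset.le_sup' b (Finset.mem_univ i)
      have hbi := hx i
      have := (hbi.trans this)
      exact mul_le_mul_of_nonneg_left this (by positivity)
    have hεB : ε ≤ ‖x‖⁻¹ * B := le_trans hmin hle
    have : ε * ‖x‖ ≤ B := by
      have := mul_le_mul_of_nonneg_right hεB (le_of_lt hxn)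
      rwa [inv_mul_eq_div, div_mul_cancel₀ _ (ne_of_gt hxn)] at this
    have : ‖x‖ ≤ B / ε := by
      rw [le_div_iff₀ hε_pos]; linarith
    exact this.trans (le_max_right _ _)

lemma convex_dense_eq_univ {d : ℕ} {s : Set (EuclideanSpace ℝ (Fin d))}
    (hc : Convex ℝ s) (hdense : Dense s) : s = Set.univ := by
  have hclos : closure s = Set.univ := hdense.closure_eq
  have hspan : affineSpan ℝ s = ⊤ := by
    have h1 : IsClosed (affineSpan ℝ s : Set (EuclideanSpace ℝ (Fin d))) :=
      (affineSpan ℝ s).closed_of_finiteDimensional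
    have h2 : closure s ⊆ (affineSpan ℝ s : Set _) :=
      h1.closure_subset_iff.mpr (subset_affineSpan ℝ s)
    rw [hclos] at h2
    have : (affineSpan ℝ s : Set (EuclideanSpace ℝ (Fin d))) = Set.univ := Set.eq_univ_of_univ_subset h2
    rwa [AffineSubspace.coe_eq_univ_iff] at this
  obtain ⟨x, hx⟩ := hc.interior_nonempty_iff_affineSpan_eq_top.mpr hspan
  apply Set.eq_univ_of_forall
  intro y
  by_cases hxy : y = x
  · exact hxy ▸ interior_subset hx
  · have hz : (2 : ℝ) • y - x ∈ closure s := by rw [hclos]; trivial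
    have hseg : y ∈ openSegment ℝ x ((2 : ℝ) • y - x) := by
      refine ⟨1/2, 1/2, by norm_num, by norm_num, by norm_num, ?_⟩
      rw [smul_sub, smul_smul]
      norm_num
    exact interior_subset (hc.openSegment_interior_closure_subset_interior hx hz hseg)

/-- The finitely generated cone on the `a i`. -/
def coneC {d N : ℕ} (a : Fin N → EuclideanSpace ℝ (Fin d)) :
    ConvexCone ℝ (EuclideanSpace ℝ (Fin d)) where
  carrier := {x | ∃ p : Fin N → ℝ, (∀ i, 0 ≤ p i) ∧ ∑ i, p i • a i = x}
  smul_mem' := by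
    rintro t ht x ⟨p, hp, rfl⟩
    exact ⟨fun i => t * p i, fun i => mul_nonneg ht.le (hp i), by
      rw [Finset.smul_sum]; simp [mul_smul]⟩
  add_mem' := by
    rintro x ⟨p, hp, rfl⟩ y ⟨q, hq, rfl⟩
    exact ⟨p + q, fun i => add_nonneg (hp i) (hq i), by
      simp [add_smul, Finset.sum_add_distrib]⟩

lemma aux_farkas {d N : ℕ} (a : Fin N → EuclideanSpace ℝ (Fin d))
    (h0 : Qset a 0 = {0}) (c : EuclideanSpace ℝ (Fin d)) : (Qstar a c).Nonempty := by
  set C : Set (EuclideanSpace ℝ (Fin d)) := SetLike.coe (coneC a) with hC_def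
  have h0C : (0 : EuclideanSpace ℝ (Fin d)) ∈ C := ⟨0, fun i => le_refl 0, by simp⟩
  have haC : ∀ i, a i ∈ C := by
    intro i
    exact ⟨Pi.single i 1, fun j => by
        by_cases h : j = i <;> simp [Pi.single_apply, h], by
      simp [Pi.single_apply, Finset.sum_ite_eq']⟩
  have hCconv : Convex ℝ C := (coneC a).convex
  have hCdense : Dense C := by
    rw [dense_iff_closure_eq]
    by_contra hne
    have : ∃ x, x ∉ closure C := by
      by_contra h
      push_neg at h
      exact hne (Set.eq_univ_of_forall h)
    obtain ⟨x, hx⟩ := this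
    set K : ConvexCone ℝ (EuclideanSpace ℝ (Fin d)) := (coneC a).closure with hK_def
    have hKco : SetLike.coe K = closure C := ConvexCone.coe_closure _
    have hKne : (SetLike.coe K).Nonempty := ⟨0, by rw [hKco]; exact subset_closure h0C⟩
    have hKcl : IsClosed (SetLike.coe K) := by rw [hKco]; exact isClosed_closure
    have hxK : x ∉ K := by
      intro h
      exact hx (hKco ▸ h)
    obtain ⟨y, hy1, hy2⟩ :=
      (show ∃ y, (∀ z ∈ K, 0 ≤ ⟪z, y⟫) ∧ ⟪x, y⟫ < 0 from
        ProperCone.hyperplane_separation' (x₀ := x)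
          ⟨K.toPointedCone (show (0 : EuclideanSpace ℝ (Fin d)) ∈ K by
            rw [← SetLike.mem_coe, hKco]; exact subset_closure h0C), hKcl⟩ hxK)
    have hyQ : -y ∈ Qset a 0 := by
      intro i
      have hmem : a i ∈ SetLike.coe K := by
        rw [hKco]; exact subset_closure (haC i)
      have := hy1 (a i) hmem
      rw [inner_neg_right]
      simpa using neg_nonpos_of_nonneg this
    rw [h0] at hyQ
    rw [Set.mem_singleton_iff, neg_eq_zero] at hyQ
    rw [hyQ] at hy2
    simp at hy2
  have hCuniv : C = Set.univ := convex_dense_eq_univ hCconv hCdense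
  have : c ∈ C := hCuniv ▸ Set.mem_univ c
  obtain ⟨p, hp, hpc⟩ := this
  exact ⟨p, hp, hpc⟩

theorem stmt_3 (d N : ℕ) (hd : 1 ≤ d) (hN : 1 ≤ N)
    (a : Fin N → EuclideanSpace ℝ (Fin d))
    (ha_inj : Function.Injective a) (ha_norm : ∀ i, ‖a i‖ = 1) :
    ((∀ S ∈ GA a, ¬ Bornology.IsBounded S) ∨ (∀ S ∈ GA a, Bornology.IsBounded S)) ∧
    ((∀ S ∈ GA a, Bornology.IsBounded S) ↔ Qset a 0 = {0}) ∧
    ((∀ S ∈ GA a, Bornology.IsBounded S) ↔ ∀ c : EuclideanSpace ℝ (Fin d), (Qstar a c).Nonempty) := by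
  have hQ0ne : (Qset a 0).Nonempty := ⟨0, zero_mem_Qset_zero a⟩
  have hPZ : (∀ S ∈ GA a, Bornology.IsBounded S) ↔ Qset a 0 = {0} := by
    constructor
    · intro hP
      apply Set.eq_singleton_iff_unique_mem.mpr
      refine ⟨zero_mem_Qset_zero a, fun y hy => ?_⟩
      by_contra hy0
      exact aux_unbounded a hy hy0 0 hQ0ne (hP _ ⟨⟨0, rfl⟩, hQ0ne⟩)
    · rintro hZ S ⟨⟨b, rfl⟩, _⟩
      exact aux_bounded hd hN a hZ b
  have hZQ : Qset a 0 = {0} ↔ ∀ c : EuclideanSpace ℝ (Fin d), (Qstar a c).Nonempty := by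
    constructor
    · exact fun hZ c => aux_farkas a hZ c
    · intro hQ
      apply Set.eq_singleton_iff_unique_mem.mpr
      refine ⟨zero_mem_Qset_zero a, fun y hy => ?_⟩
      obtain ⟨p, hp, hpc⟩ := hQ y
      have h2 : ⟪∑ i, p i • a i, y⟫ = ⟪y, y⟫ := by rw [hpc]
      rw [sum_inner] at h2
      have hinner : ⟪y, y⟫ ≤ 0 := by
        rw [← h2]
        apply Finset.sum_nonpos
        intro i _
        rw [real_inner_smul_left]
        exact mul_nonpos_of_nonneg_of_nonpos (hp i) (by simpa using hy i)
      exact real_inner_self_nonpos.mp hinner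
  refine ⟨?_, hPZ, hPZ.trans hZQ⟩
  by_cases hZ : Qset a 0 = {0}
  · exact Or.inr (hPZ.mpr hZ)
  · left
    have : ∃ y ∈ Qset a 0, y ≠ 0 := by
      by_contra h
      push_neg at h
      apply hZ
      apply Set.eq_singleton_iff_unique_mem.mpr
      exact ⟨zero_mem_Qset_zero a, fun y hy => by
        by_contra hy0; exact hy0 (h y hy)⟩
    obtain ⟨y, hy, hy0⟩ := this
    rintro S ⟨⟨b, rfl⟩, hne⟩
    exact aux_unbounded a hy hy0 b hne
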